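/- Let $(A, \mathfrak{m}, k)$ be a noetherian local ring and $(F^\bullet, d^\bullet)$ a cochain complex of free $A$-modules of finite rank. Suppose the base change map $\varphi^p \colon H^p(F^\bullet) \otimes_A k \to H^p(F^\bullet \otimes_A k)$ is surjective. Then $\varphi^{p-1}$ is surjective if and only if $H^p(F^\bullet)$ is a free $A$-module. -/

import Mathlib

open TensorProduct IsLocalRing

open TensorProduct

section Defs

variable (A : Type*) [CommRing A] (k : Type*) [CommRing k] [Algebra A k]
variable {M0 M1 M2 : Type*} [AddCommGroup M0] [AddCommGroup M1] [AddCommGroup M2]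
  [Module A M0] [Module A M1] [Module A M2]

/-- Cohomology of `M0 → M1 → M2` at the middle spot. -/
abbrev coh (d0 : M0 →ₗ[A] M1) (d1 : M1 →ₗ[A] M2) : Type _ :=
  LinearMap.ker d1 ⧸ (LinearMap.range d0).comap (LinearMap.ker d1).subtype

variable (d0 : M0 →ₗ[A] M1) (d1 : M1 →ₗ[A] M2)

/-- The map on kernels induced by `x ↦ 1 ⊗ x`. -/
noncomputable def kerBaseChange : LinearMap.ker d1 →ₗ[A] LinearMap.ker (d1.baseChange k) :=
  LinearMap.codRestrict ((LinearMap.ker (d1.baseChange k)).restrictScalars A)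
    (((TensorProduct.mk A k M1) 1).comp (LinearMap.ker d1).subtype)
    (fun x => by
      simp [LinearMap.mem_ker, (LinearMap.mem_ker.mp x.2)])

/-- The natural base change map `k ⊗ H(F) → H(F ⊗ k)` on cohomology. -/
noncomputable def cohBaseChange :
    k ⊗[A] coh A d0 d1 →ₗ[k] coh k (d0.baseChange k) (d1.baseChange k) :=
  LinearMap.liftBaseChange k <|
    Submodule.liftQ _
      (((Submodule.mkQ _).restrictScalars A).comp (kerBaseChange A k d1))
      (by
        rintro ⟨x, hx⟩ ⟨y, rfl⟩
        have : kerBaseChange A k d1 ⟨d0 y, hx⟩ ∈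
            (LinearMap.range (d0.baseChange k)).comap
              (LinearMap.ker (d1.baseChange k)).subtype := by
          refine ⟨1 ⊗ₜ y, ?_⟩
          rfl
        simpa [LinearMap.mem_ker, Submodule.Quotient.mk_eq_zero] using this)

end Defs

section Aux

variable {A : Type*} [CommRing A] [IsLocalRing A] [IsNoetherianRing A]

set_option maxHeartbeats 1000000 in
/-- Surjectivity of the base change map on cohomology at `(d1, d2)` is equivalent to
injectivity of `k ⊗ range d2 → k ⊗ F3`. -/
lemma cohBaseChange_surjective_iff
    {F1 F2 F3 : Type*} [AddCommGroup F1] [AddCommGroup F2] [AddCommGroup F3]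
    [Module A F1] [Module A F2] [Module A F3]
    (d1 : F1 →ₗ[A] F2) (d2 : F2 →ₗ[A] F3) (hc : d2 ∘ₗ d1 = 0) :
    Function.Surjective (cohBaseChange A (ResidueField A) d1 d2) ↔
      Function.Injective ((LinearMap.range d2).subtype.lTensor (ResidueField A)) := by
  set k := ResidueField A
  set Z := LinearMap.ker d2 with hZ
  set T := LinearMap.range d2 with hT
  set e := d2.rangeRestrict with he
  have hesurj : Function.Surjective e := d2.surjective_rangeRestrict
  have hZsub : d2 ∘ₗ Z.subtype = 0 := by
    ext ⟨x, hx⟩; exact hx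
  have heZ : e ∘ₗ Z.subtype = 0 := by
    ext ⟨x, hx⟩
    exact hx
  have hed1 : e ∘ₗ d1 = 0 := by
    ext x
    exact LinearMap.congr_fun hc x
  have hexact : Function.Exact Z.subtype e := by
    rw [LinearMap.exact_iff, LinearMap.ker_rangeRestrict, Submodule.range_subtype]
  have hTexact : Function.Exact (Z.subtype.lTensor k) (e.lTensor k) :=
    lTensor_exact k hexact hesurj
  have heksurj : Function.Surjective (e.lTensor k) := LinearMap.lTensor_surjective k hesurj
  -- expressing `d2.baseChange k` through `e`
  have hd2split : ∀ z : k ⊗[A] F2, d2.baseChange k z = T.subtype.lTensor k (e.lTensor k z) := by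
    intro z
    have h1 : T.subtype ∘ₗ e = d2 := by ext x; rfl
    have h3 : (T.subtype ∘ₗ e).lTensor k z = T.subtype.lTensor k (e.lTensor k z) := by
      rw [LinearMap.lTensor_comp, LinearMap.comp_apply]
    rw [← h3, h1]
    rfl
  -- the membership lemma defining `j`
  have hmem : ∀ w : k ⊗[A] Z, Z.subtype.lTensor k w ∈ LinearMap.ker (d2.baseChange k) := by
    intro w
    rw [LinearMap.mem_ker]
    have h0 : d2.baseChange k (Z.subtype.lTensor k w) = d2.lTensor k (Z.subtype.lTensor k w) := rfl
    rw [h0, ← LinearMap.comp_apply, ← LinearMap.lTensor_comp, hZsub]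
    simp
  set j : k ⊗[A] Z →ₗ[A] ((LinearMap.ker (d2.baseChange k)).restrictScalars A) :=
    LinearMap.codRestrict ((LinearMap.ker (d2.baseChange k)).restrictScalars A)
      (Z.subtype.lTensor k) hmem with hj
  set π : Z →ₗ[A] coh A d1 d2 :=
    Submodule.mkQ ((LinearMap.range d1).comap Z.subtype) with hπ
  set Q : LinearMap.ker (d2.baseChange k) →ₗ[k]
      coh k (d1.baseChange k) (d2.baseChange k) :=
    Submodule.mkQ _ with hQ
  have key : ∀ w : k ⊗[A] Z,
      cohBaseChange A k d1 d2 (π.lTensor k w) = Q (j w) := by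
    intro w
    induction w using TensorProduct.induction_on with
    | zero => simp; exact (map_zero Q).symm
    | tmul c x =>
      have h1 : π.lTensor k (c ⊗ₜ[A] x) = c ⊗ₜ[A] (π x) := rfl
      rw [h1]
      have h2 : cohBaseChange A k d1 d2 (c ⊗ₜ[A] (π x)) =
          c • (Q (kerBaseChange A k d2 x)) := by
        simp only [cohBaseChange]
        rw [LinearMap.liftBaseChange_tmul, hπ, Submodule.mkQ_apply, Submodule.liftQ_apply]
        rfl
      rw [h2, ← Q.map_smul]
      refine congrArg Q (Subtype.ext ?_)
      show c • ((1 : k) ⊗ₜ[A] (x : F2)) = (c ⊗ₜ[A] (x : F2))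
      rw [TensorProduct.smul_tmul', smul_eq_mul, mul_one]
    | add u v hu hv =>
      simp only [map_add, hu, hv]
      exact (map_add Q _ _).symm
  constructor
  · -- surjective → injective
    intro hs
    rw [injective_iff_map_eq_zero]
    intro u hu
    obtain ⟨z, rfl⟩ := heksurj u
    have hz : z ∈ LinearMap.ker (d2.baseChange k) := by
      rw [LinearMap.mem_ker, hd2split, hu]
    obtain ⟨v, hv⟩ := hs (Q ⟨z, hz⟩)
    obtain ⟨w, rfl⟩ := LinearMap.lTensor_surjective k
      (Submodule.mkQ_surjective ((LinearMap.range d1).comap Z.subtype)) v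
    rw [key w] at hv
    have hdiff : j w - ⟨z, hz⟩ ∈ (LinearMap.range (d1.baseChange k)).comap
        (LinearMap.ker (d2.baseChange k)).subtype := by
      refine (Submodule.Quotient.eq (R := k) (M := LinearMap.ker (d2.baseChange k)) _).mp ?_
      exact hv
    obtain ⟨y, hy⟩ := hdiff
    have hval : ((LinearMap.ker (d2.baseChange k)).subtype)
        (j w - (⟨z, hz⟩ : (Submodule.restrictScalars A (LinearMap.ker (d2.baseChange k))))) =
        Z.subtype.lTensor k w - z := by
      simp [hj]
      rfl
    have hy' : d1.baseChange k y = Z.subtype.lTensor k w - z := hy.trans hval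
    have hek : e.lTensor k z = e.lTensor k (Z.subtype.lTensor k w) -
        e.lTensor k (d1.baseChange k y) := by
      rw [hy']
      rw [map_sub]
      abel
    have h1 : e.lTensor k (Z.subtype.lTensor k w) = 0 := by
      rw [← LinearMap.comp_apply, ← LinearMap.lTensor_comp, heZ]
      simp
    have h2 : e.lTensor k (d1.baseChange k y) = 0 := by
      have h0 : e.lTensor k (d1.baseChange k y) = e.lTensor k (d1.lTensor k y) := rfl
      rw [h0, ← LinearMap.comp_apply, ← LinearMap.lTensor_comp, hed1]
      simp
    rw [hek, h1, h2, sub_zero]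
  · -- injective → surjective
    intro hinj c
    obtain ⟨⟨z, hz⟩, rfl⟩ := Submodule.mkQ_surjective _ c
    have hez : e.lTensor k z = 0 := by
      apply hinj
      rw [← hd2split z, LinearMap.mem_ker.mp hz, map_zero]
    obtain ⟨w, hw⟩ := (hTexact z).mp hez
    refine ⟨π.lTensor k w, ?_⟩
    rw [key w]
    congr 1
    exact Subtype.ext hw

/-- A direct summand of a free module which is finite over a noetherian local ring is free. -/
lemma free_of_split' {M P : Type*} [AddCommGroup M] [Module A M] [AddCommGroup P] [Module A P]
    [Module.Free A P] [Module.Finite A M] (i : M →ₗ[A] P) (r : P →ₗ[A] M)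
    (h : r ∘ₗ i = LinearMap.id) : Module.Free A M := by
  have : Module.Projective A M := Module.Projective.of_split i r h
  have : Module.FinitePresentation A M := Module.finitePresentation_of_finite A M
  exact Module.free_of_flat_of_isLocalRing

/-- Injectivity of `k ⊗ N → k ⊗ F` is equivalent to freeness of `F ⧸ N`. -/
lemma lTensor_injective_iff_quotient_free
    {F : Type*} [AddCommGroup F] [Module A F] [Module.Free A F] [Module.Finite A F]
    (N : Submodule A F) :
    Function.Injective (N.subtype.lTensor (ResidueField A)) ↔ Module.Free A (F ⧸ N) := by
  have : Module.Finite A N :=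
    Module.Finite.iff_fg.mpr (IsNoetherian.noetherian N)
  constructor
  · intro h
    exact Module.free_of_lTensor_residueField_injective N.subtype N.mkQ
      (Submodule.mkQ_surjective N) (LinearMap.exact_subtype_mkQ N) h
  · intro h
    rw [← IsLocalRing.split_injective_iff_lTensor_residueField_injective]
    obtain ⟨s, hs⟩ := Module.projective_lifting_property N.mkQ LinearMap.id
      (Submodule.mkQ_surjective N)
    have htfae := (LinearMap.exact_subtype_mkQ N).split_tfae Subtype.val_injective
      (Submodule.mkQ_surjective N)
    have h01 : (∃ l, N.mkQ ∘ₗ l = LinearMap.id) ↔ (∃ l, l ∘ₗ N.subtype = LinearMap.id) :=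
      htfae.out 0 1
    exact h01.mp ⟨s, hs⟩

end Aux

theorem stmt7 {A : Type*} [CommRing A] [IsLocalRing A] [IsNoetherianRing A]
    {F0 : Type*} [AddCommGroup F0] [Module A F0] [Module.Free A F0] [Module.Finite A F0]
    {F1 : Type*} [AddCommGroup F1] [Module A F1] [Module.Free A F1] [Module.Finite A F1]
    {F2 : Type*} [AddCommGroup F2] [Module A F2] [Module.Free A F2] [Module.Finite A F2]
    {F3 : Type*} [AddCommGroup F3] [Module A F3] [Module.Free A F3] [Module.Finite A F3]
    (d0 : F0 →ₗ[A] F1) (d1 : F1 →ₗ[A] F2) (d2 : F2 →ₗ[A] F3)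
    (hc01 : d1 ∘ₗ d0 = 0) (hc12 : d2 ∘ₗ d1 = 0)
    (hsurj : Function.Surjective (cohBaseChange A (ResidueField A) d1 d2)) :
    Function.Surjective (cohBaseChange A (ResidueField A) d0 d1) ↔
      Module.Free A (coh A d1 d2) := by
  -- from `hsurj`: `k ⊗ range d2 → k ⊗ F3` is injective, hence `range d2` is free.
  have hT1 : Function.Injective ((LinearMap.range d2).subtype.lTensor (ResidueField A)) :=
    (cohBaseChange_surjective_iff d1 d2 hc12).mp hsurj
  have hNoeth3 : IsNoetherian A F3 := isNoetherian_of_isNoetherianRing_of_finite A F3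
  have hTfin : Module.Finite A (LinearMap.range d2) :=
    Module.Finite.iff_fg.mpr (IsNoetherian.noetherian _)
  obtain ⟨r, hr⟩ :=
    (IsLocalRing.split_injective_iff_lTensor_residueField_injective
      (LinearMap.range d2).subtype).mpr hT1
  have hTfree : Module.Free A (LinearMap.range d2) :=
    free_of_split' (LinearMap.range d2).subtype r hr
  -- the induced map `g : F2 ⧸ range d1 → range d2` and its section `s`
  have hBle : LinearMap.range d1 ≤ LinearMap.ker d2.rangeRestrict := by
    rw [LinearMap.ker_rangeRestrict]
    exact LinearMap.range_le_ker_iff.mpr hc12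
  set g : (F2 ⧸ LinearMap.range d1) →ₗ[A] LinearMap.range d2 :=
    Submodule.liftQ _ d2.rangeRestrict hBle with hg
  have hgmkQ : g ∘ₗ (LinearMap.range d1).mkQ = d2.rangeRestrict :=
    Submodule.liftQ_mkQ _ _ _
  have hgsurj : Function.Surjective g := by
    intro t
    obtain ⟨x, hx⟩ := d2.surjective_rangeRestrict t
    exact ⟨(LinearMap.range d1).mkQ x, by rw [← hx, ← hgmkQ]; rfl⟩
  obtain ⟨s, hgs⟩ := Module.projective_lifting_property g LinearMap.id hgsurj
  have hgsId : ∀ t, g (s t) = t := fun t => by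
    rw [← LinearMap.comp_apply, hgs]; rfl
  -- the cohomology `coh A d1 d2` is isomorphic to `ker g`
  set h : (LinearMap.ker d2 : Submodule A F2) →ₗ[A] F2 ⧸ LinearMap.range d1 :=
    (LinearMap.range d1).mkQ ∘ₗ (LinearMap.ker d2).subtype with hh
  have hker : LinearMap.ker h = (LinearMap.range d1).comap (LinearMap.ker d2).subtype := by
    rw [hh, LinearMap.ker_comp, Submodule.ker_mkQ]
  have hrange : LinearMap.range h = LinearMap.ker g := by
    have h1 : LinearMap.range h = (LinearMap.ker d2).map (LinearMap.range d1).mkQ := by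
      rw [hh, LinearMap.range_comp, Submodule.range_subtype]
    have h2 : Submodule.comap (LinearMap.range d1).mkQ (LinearMap.ker g) =
        LinearMap.ker d2 := by
      rw [← LinearMap.ker_comp, hgmkQ, LinearMap.ker_rangeRestrict]
    rw [h1, ← h2,
      Submodule.map_comap_eq_of_surjective (Submodule.mkQ_surjective (LinearMap.range d1))]
  have E : coh A d1 d2 ≃ₗ[A] LinearMap.ker g :=
    (Submodule.quotEquivOfEq _ _ hker.symm).trans
      ((h.quotKerEquivRange).trans (LinearEquiv.ofEq _ _ hrange))
  -- auxiliary projection onto `ker g`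
  have hproj : ∀ x : F2 ⧸ LinearMap.range d1, x - s (g x) ∈ LinearMap.ker g := fun x => by
    rw [LinearMap.mem_ker, map_sub, hgsId, sub_self]
  have hQfin : Module.Finite A (F2 ⧸ LinearMap.range d1) :=
    Module.Finite.of_surjective (LinearMap.range d1).mkQ
      (Submodule.mkQ_surjective _)
  have hQnoeth : IsNoetherian A (F2 ⧸ LinearMap.range d1) :=
    isNoetherian_of_isNoetherianRing_of_finite A _
  -- main chain of equivalences
  rw [cohBaseChange_surjective_iff d0 d1 hc01,
    lTensor_injective_iff_quotient_free (LinearMap.range d1)]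
  constructor
  · intro hfree
    set rG : (F2 ⧸ LinearMap.range d1) →ₗ[A] LinearMap.ker g :=
      LinearMap.codRestrict (LinearMap.ker g) (LinearMap.id - s ∘ₗ g)
        (fun x => by simpa using hproj x) with hrG
    have hrGsub : rG ∘ₗ (LinearMap.ker g).subtype = LinearMap.id := by
      ext ⟨x, hx⟩
      show (x : F2 ⧸ LinearMap.range d1) - s (g x) = x
      rw [LinearMap.mem_ker.mp hx, map_zero, sub_zero]
    have hfinker : Module.Finite A (LinearMap.ker g) :=
      Module.Finite.iff_fg.mpr (IsNoetherian.noetherian _)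
    have : Module.Free A (LinearMap.ker g) :=
      free_of_split' (LinearMap.ker g).subtype rG hrGsub
    exact Module.Free.of_equiv E.symm
  · intro hfree
    have hGfree : Module.Free A (LinearMap.ker g) := Module.Free.of_equiv E
    set φ : (LinearMap.ker g × LinearMap.range d2) →ₗ[A] F2 ⧸ LinearMap.range d1 :=
      (LinearMap.ker g).subtype.coprod s with hφ
    have hφap : ∀ p : LinearMap.ker g × LinearMap.range d2,
        φ p = (p.1 : F2 ⧸ LinearMap.range d1) + s p.2 := fun p => rfl
    have hgφ : ∀ p : LinearMap.ker g × LinearMap.range d2, g (φ p) = p.2 := fun p => by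
      rw [hφap, map_add, hgsId, LinearMap.mem_ker.mp p.1.2, zero_add]
    have hbij : Function.Bijective φ := by
      constructor
      · intro p q hpq
        have h2 : p.2 = q.2 := by rw [← hgφ p, ← hgφ q, hpq]
        have e1 : (p.1 : F2 ⧸ LinearMap.range d1) + s p.2 =
            (q.1 : F2 ⧸ LinearMap.range d1) + s q.2 := by
          rw [← hφap, ← hφap, hpq]
        rw [h2] at e1
        exact Prod.ext (Subtype.ext (add_right_cancel e1)) h2
      · intro x
        refine ⟨⟨⟨x - s (g x), hproj x⟩, g x⟩, ?_⟩
        rw [hφap]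
        exact sub_add_cancel x (s (g x))
    exact Module.Free.of_equiv (LinearEquiv.ofBijective φ hbij)
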